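/- Let $s \geq 2$ and let $\Omega \subset \mathbb{R}^d$ be thick. Assume the resolvent estimate for the fractional operator: there exist $C, c > 0$ such that $c e^{-C\mu}\|f\|_{L^2}^2 \leq \|((-\Delta+1)^{s/4} - \mu)f\|_{L^2}^2 + \|f\|_{L^2(\Omega)}^2$ for all $f \in L^2(\mathbb{R}^d)$ and $\mu \geq 0$. Then there exist $C', c' > 0$ such that for all $U = (u_1, u_2) \in H^s(\mathbb{R}^d) \times H^{s/2}(\mathbb{R}^d)$ and all $\lambda \in \mathbb{R}$: $c' e^{-C'|\lambda|}\|U\|^2_{H^{s/2} \times L^2} \leq \|(\mathcal{A}_0 - i\lambda I)U\|^2_{H^{s/2} \times L^2} + \|u_2\|^2_{L^2(\Omega)}$. -/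

import Mathlib

open MeasureTheory ENNReal NNReal Complex
open scoped FourierTransform

/-- A measurable set `Ω ⊆ ℝ^d` is thick if some cube side-length `L` and density `δ` witness
`|Ω ∩ (x + [0,L]^d)| ≥ δ L^d` for every `x`. -/
def Thick {d : ℕ} (Ω : Set (EuclideanSpace ℝ (Fin d))) : Prop :=
  ∃ L > (0 : ℝ), ∃ δ > (0 : ℝ), ∀ x : EuclideanSpace ℝ (Fin d),
    ENNReal.ofReal (δ * L ^ d) ≤ volume (Ω ∩ {y | ∀ i, x i ≤ y i ∧ y i ≤ x i + L})

set_option maxHeartbeats 2000000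

section Helpers

variable {X : Type*} [MeasurableSpace X] {μ : Measure X}

private lemma lintegral_nnnorm_sq_eq (f : X → ℂ) :
    ∫⁻ x, (‖f x‖₊ : ℝ≥0∞) ^ 2 ∂μ = eLpNorm f 2 μ ^ 2 := by
  rw [eLpNorm_eq_lintegral_rpow_enorm_toReal (by norm_num) (by norm_num)]
  rw [← ENNReal.rpow_natCast _ 2, ← ENNReal.rpow_mul]
  norm_num
  rfl

private lemma memLp_of_sq (f : X → ℂ) (hm : AEStronglyMeasurable f μ)
    (h : ∫⁻ x, (‖f x‖₊ : ℝ≥0∞) ^ 2 ∂μ < ⊤) : MemLp f 2 μ := by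
  refine ⟨hm, ?_⟩
  rw [lintegral_nnnorm_sq_eq f] at h
  by_contra hcon
  rw [not_lt, top_le_iff] at hcon
  rw [hcon] at h
  rw [ENNReal.top_pow (by norm_num)] at h
  exact lt_irrefl _ h

private lemma eLpNorm_eq_of_norm_eq {f g : Lp ℂ 2 μ} (h : ‖f‖ = ‖g‖) :
    eLpNorm (⇑f) 2 μ = eLpNorm (⇑g) 2 μ := by
  rw [Lp.norm_def, Lp.norm_def] at h
  exact (ENNReal.toReal_eq_toReal_iff' (Lp.eLpNorm_ne_top f) (Lp.eLpNorm_ne_top g)).mp h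

private lemma lintegral_sq_eq_of_norm_eq {f g : Lp ℂ 2 μ} (h : ‖f‖ = ‖g‖) :
    ∫⁻ x, (‖f x‖₊ : ℝ≥0∞) ^ 2 ∂μ = ∫⁻ x, (‖g x‖₊ : ℝ≥0∞) ^ 2 ∂μ := by
  rw [lintegral_nnnorm_sq_eq, lintegral_nnnorm_sq_eq, eLpNorm_eq_of_norm_eq h]

private lemma nnnorm_add_sq_le_two (z w : ℂ) :
    (‖z + w‖₊ : ℝ≥0∞) ^ 2 ≤ 2 * (‖z‖₊ : ℝ≥0∞) ^ 2 + 2 * (‖w‖₊ : ℝ≥0∞) ^ 2 := by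
  have h : ‖z + w‖₊ ^ 2 ≤ 2 * ‖z‖₊ ^ 2 + 2 * ‖w‖₊ ^ 2 := by
    rw [← NNReal.coe_le_coe]
    push_cast
    have := norm_add_le z w
    nlinarith [sq_nonneg (‖z‖ - ‖w‖), norm_nonneg z, norm_nonneg w, norm_nonneg (z + w)]
  calc (‖z + w‖₊ : ℝ≥0∞) ^ 2 = ((‖z + w‖₊ ^ 2 : ℝ≥0) : ℝ≥0∞) := by push_cast; ring
    _ ≤ ((2 * ‖z‖₊ ^ 2 + 2 * ‖w‖₊ ^ 2 : ℝ≥0) : ℝ≥0∞) := by exact_mod_cast ENNReal.coe_le_coe.2 h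
    _ = 2 * (‖z‖₊ : ℝ≥0∞) ^ 2 + 2 * (‖w‖₊ : ℝ≥0∞) ^ 2 := by push_cast; ring

private lemma nnnorm_sub_sq_le_two (z w : ℂ) :
    (‖z - w‖₊ : ℝ≥0∞) ^ 2 ≤ 2 * (‖z‖₊ : ℝ≥0∞) ^ 2 + 2 * (‖w‖₊ : ℝ≥0∞) ^ 2 := by
  rw [sub_eq_add_neg]
  simpa using nnnorm_add_sq_le_two z (-w)

private lemma nnnorm_parallelogram (x y : ℂ) :
    (‖x - y‖₊ : ℝ≥0∞) ^ 2 + (‖x + y‖₊ : ℝ≥0∞) ^ 2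
      = 2 * (‖x‖₊ : ℝ≥0∞) ^ 2 + 2 * (‖y‖₊ : ℝ≥0∞) ^ 2 := by
  have h : ‖x - y‖₊ ^ 2 + ‖x + y‖₊ ^ 2 = 2 * ‖x‖₊ ^ 2 + 2 * ‖y‖₊ ^ 2 := by
    rw [← NNReal.coe_inj]
    push_cast
    simp only [Complex.sq_norm, Complex.normSq_apply,
      Complex.sub_re, Complex.sub_im, Complex.add_re, Complex.add_im]
    ring
  calc (‖x - y‖₊ : ℝ≥0∞) ^ 2 + (‖x + y‖₊ : ℝ≥0∞) ^ 2
      = ((‖x - y‖₊ ^ 2 + ‖x + y‖₊ ^ 2 : ℝ≥0) : ℝ≥0∞) := by push_cast; ring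
    _ = ((2 * ‖x‖₊ ^ 2 + 2 * ‖y‖₊ ^ 2 : ℝ≥0) : ℝ≥0∞) := by rw [h]
    _ = 2 * (‖x‖₊ : ℝ≥0∞) ^ 2 + 2 * (‖y‖₊ : ℝ≥0∞) ^ 2 := by push_cast; ring

private lemma ofReal_sq_mul_nnnorm (α : ℝ) (hα : 0 ≤ α) (z : ℂ) :
    ENNReal.ofReal (α ^ 2) * (‖z‖₊ : ℝ≥0∞) ^ 2 = (‖((α : ℂ) * z)‖₊ : ℝ≥0∞) ^ 2 := by
  rw [nnnorm_mul]
  push_cast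
  rw [mul_pow]
  congr 1
  rw [ENNReal.ofReal, Real.toNNReal_pow hα]
  norm_cast
  rw [Real.nnnorm_of_nonneg hα, Real.toNNReal_of_nonneg hα]

private lemma idA (α lam : ℝ) (v₁ v₂ : ℂ) :
    (α : ℂ) * (v₂ - (Complex.I * lam) * v₁)
      + Complex.I * (((α ^ 2 : ℝ) : ℂ) * v₁ + (Complex.I * lam) * v₂)
    = Complex.I * ((α - lam : ℝ) : ℂ) * ((α : ℂ) * v₁ - Complex.I * v₂) := by
  push_cast
  linear_combination ((α : ℂ) * v₂) * Complex.I_sq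

private lemma idB (α lam : ℝ) (v₁ v₂ : ℂ) :
    (α : ℂ) * (v₂ - (Complex.I * lam) * v₁)
      - Complex.I * (((α ^ 2 : ℝ) : ℂ) * v₁ + (Complex.I * lam) * v₂)
    = -Complex.I * ((α + lam : ℝ) : ℂ) * ((α : ℂ) * v₁ + Complex.I * v₂) := by
  push_cast
  linear_combination ((α : ℂ) * v₂) * Complex.I_sq

private lemma lintegral_two_add_two (a b : X → ℝ≥0∞) (ha : AEMeasurable a μ) :
    ∫⁻ x, (2 * a x + 2 * b x) ∂μ = 2 * (∫⁻ x, a x ∂μ) + 2 * ∫⁻ x, b x ∂μ := by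
  rw [lintegral_add_left' (ha.const_mul 2), lintegral_const_mul' 2 a (by norm_num),
    lintegral_const_mul' 2 b (by norm_num)]

private lemma nnnorm_I_mul (z : ℂ) : ‖Complex.I * z‖₊ = ‖z‖₊ := by
  rw [nnnorm_mul]; simp

private lemma lintegral_cmul_add_cmul {X : Type*} [MeasurableSpace X] {μ : Measure X}
    (r₁ r₂ : ℝ≥0∞) (hr₁ : r₁ ≠ ⊤) (hr₂ : r₂ ≠ ⊤) (a b : X → ℝ≥0∞) (ha : AEMeasurable a μ) :
    ∫⁻ x, (r₁ * a x + r₂ * b x) ∂μ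
      = r₁ * (∫⁻ x, a x ∂μ) + r₂ * ∫⁻ x, b x ∂μ := by
  rw [lintegral_add_left' (ha.const_mul r₁), lintegral_const_mul' r₁ a hr₁,
    lintegral_const_mul' r₂ b hr₂]

private lemma normA (α lam : ℝ) (v₁ v₂ : ℂ) (t : ℝ) (ht : t = α ^ 2) :
    (‖(((α - lam : ℝ) : ℂ) * ((α : ℂ) * v₁ - Complex.I * v₂))‖₊ : ℝ≥0∞) ^ 2
      ≤ 2 * (‖((α : ℂ) * (v₂ - (Complex.I * lam) * v₁))‖₊ : ℝ≥0∞) ^ 2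
        + 2 * (‖(((t : ℝ) : ℂ) * v₁ + (Complex.I * lam) * v₂)‖₊ : ℝ≥0∞) ^ 2 := by
  subst ht
  have hk : (‖(((α - lam : ℝ) : ℂ) * ((α : ℂ) * v₁ - Complex.I * v₂))‖₊ : ℝ≥0)
      = ‖(α : ℂ) * (v₂ - (Complex.I * lam) * v₁)
          + Complex.I * (((α ^ 2 : ℝ) : ℂ) * v₁ + (Complex.I * lam) * v₂)‖₊ := by
    rw [idA α lam v₁ v₂, mul_assoc, nnnorm_I_mul]
  rw [hk]
  refine le_trans (nnnorm_add_sq_le_two _ _) ?_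
  rw [nnnorm_I_mul]

private lemma normB (α lam : ℝ) (hα : 1 ≤ α) (hlam : 0 ≤ lam) (v₁ v₂ : ℂ)
    (t : ℝ) (ht : t = α ^ 2) :
    (‖((α : ℂ) * v₁ + Complex.I * v₂)‖₊ : ℝ≥0∞) ^ 2
      ≤ 2 * (‖((α : ℂ) * (v₂ - (Complex.I * lam) * v₁))‖₊ : ℝ≥0∞) ^ 2
        + 2 * (‖(((t : ℝ) : ℂ) * v₁ + (Complex.I * lam) * v₂)‖₊ : ℝ≥0∞) ^ 2 := by
  subst ht
  have h1 : (‖((α : ℂ) * v₁ + Complex.I * v₂)‖₊ : ℝ≥0)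
      ≤ ‖(α : ℂ) * (v₂ - (Complex.I * lam) * v₁)
          - Complex.I * (((α ^ 2 : ℝ) : ℂ) * v₁ + (Complex.I * lam) * v₂)‖₊ := by
    rw [idB α lam v₁ v₂, neg_mul, neg_mul, nnnorm_neg, mul_assoc, nnnorm_I_mul, nnnorm_mul]
    refine le_mul_of_one_le_left zero_le ?_
    rw [Complex.nnnorm_real]
    rw [← NNReal.coe_le_coe, coe_nnnorm, NNReal.coe_one, Real.norm_eq_abs,
      _root_.abs_of_nonneg (by linarith : (0:ℝ) ≤ α + lam)]
    linarith
  calc (‖((α : ℂ) * v₁ + Complex.I * v₂)‖₊ : ℝ≥0∞) ^ 2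
      ≤ ((‖(α : ℂ) * (v₂ - (Complex.I * lam) * v₁)
          - Complex.I * (((α ^ 2 : ℝ) : ℂ) * v₁ + (Complex.I * lam) * v₂)‖₊ : ℝ≥0∞)) ^ 2 := by
        exact pow_le_pow_left' (by exact_mod_cast h1) 2
    _ ≤ _ := by
        refine le_trans (nnnorm_sub_sq_le_two _ _) ?_
        rw [nnnorm_I_mul]

private lemma kg_key (d : ℕ) (s : ℝ) (hs : 2 ≤ s)
    (Ω : Set (EuclideanSpace ℝ (Fin d)))
    (F : Lp ℂ 2 (volume : Measure (EuclideanSpace ℝ (Fin d))) ≃ₗᵢ[ℂ]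
      Lp ℂ 2 (volume : Measure (EuclideanSpace ℝ (Fin d))))
    (C c : ℝ) (hC : 0 < C) (hc : 0 < c)
    (hres : ∀ f : Lp ℂ 2 (volume : Measure (EuclideanSpace ℝ (Fin d))), ∀ mu : ℝ, 0 ≤ mu →
      ENNReal.ofReal (c * Real.exp (-C * mu)) * ∫⁻ x, (‖f x‖₊ : ℝ≥0∞) ^ 2 ≤
        (∫⁻ ξ, (‖((((‖ξ‖ ^ 2 + 1) ^ (s / 4) - mu : ℝ) : ℂ) * (F f) ξ)‖₊ : ℝ≥0∞) ^ 2) +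
        ∫⁻ x in Ω, (‖f x‖₊ : ℝ≥0∞) ^ 2)
    (lam : ℝ) (hlam : 0 ≤ lam)
    (u₁ u₂ : Lp ℂ 2 (volume : Measure (EuclideanSpace ℝ (Fin d))))
    (hu₁ : (∫⁻ ξ, ENNReal.ofReal ((‖ξ‖ ^ 2 + 1) ^ s) * (‖(F u₁) ξ‖₊ : ℝ≥0∞) ^ 2) < ⊤) :
    ENNReal.ofReal (c / (c + 4) * Real.exp (-C * lam)) *
        ((∫⁻ ξ, ENNReal.ofReal ((‖ξ‖ ^ 2 + 1) ^ (s / 2)) * (‖(F u₁) ξ‖₊ : ℝ≥0∞) ^ 2) +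
          ∫⁻ x, (‖u₂ x‖₊ : ℝ≥0∞) ^ 2) ≤
      (∫⁻ ξ, ENNReal.ofReal ((‖ξ‖ ^ 2 + 1) ^ (s / 2)) *
          (‖(F u₂) ξ - (Complex.I * lam) * (F u₁) ξ‖₊ : ℝ≥0∞) ^ 2) +
      (∫⁻ ξ, (‖((((‖ξ‖ ^ 2 + 1) ^ (s / 2) : ℝ) : ℂ) * (F u₁) ξ +
          (Complex.I * lam) * (F u₂) ξ)‖₊ : ℝ≥0∞) ^ 2) +
      ∫⁻ x in Ω, (‖u₂ x‖₊ : ℝ≥0∞) ^ 2 := by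
  -- notation
  have hx1 : ∀ ξ : EuclideanSpace ℝ (Fin d), (1 : ℝ) ≤ ‖ξ‖ ^ 2 + 1 := fun ξ => by
    nlinarith [sq_nonneg ‖ξ‖]
  have hx0 : ∀ ξ : EuclideanSpace ℝ (Fin d), (0 : ℝ) ≤ ‖ξ‖ ^ 2 + 1 := fun ξ =>
    le_trans zero_le_one (hx1 ξ)
  set a : EuclideanSpace ℝ (Fin d) → ℝ := fun ξ => (‖ξ‖ ^ 2 + 1) ^ (s / 4) with ha_def
  have ha1 : ∀ ξ, (1 : ℝ) ≤ a ξ := fun ξ => Real.one_le_rpow (hx1 ξ) (by linarith)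
  have ha0 : ∀ ξ, (0 : ℝ) ≤ a ξ := fun ξ => le_trans zero_le_one (ha1 ξ)
  have hsq : ∀ ξ : EuclideanSpace ℝ (Fin d), (‖ξ‖ ^ 2 + 1) ^ (s / 2) = (a ξ) ^ 2 := fun ξ => by
    rw [ha_def]
    rw [← Real.rpow_natCast ((‖ξ‖ ^ 2 + 1) ^ (s / 4)) 2, ← Real.rpow_mul (hx0 ξ)]
    congr 1
    ring
  set h₁ : EuclideanSpace ℝ (Fin d) → ℂ :=
    fun ξ => (a ξ : ℂ) * (F u₁) ξ - Complex.I * (F u₂) ξ with hh₁_def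
  set h₂ : EuclideanSpace ℝ (Fin d) → ℂ :=
    fun ξ => (a ξ : ℂ) * (F u₁) ξ + Complex.I * (F u₂) ξ with hh₂_def
  -- measurability
  have hconta : Continuous fun ξ : EuclideanSpace ℝ (Fin d) => ((a ξ : ℝ) : ℂ) :=
    Complex.continuous_ofReal.comp
      (((continuous_norm.pow 2).add continuous_const).rpow_const fun ξ => Or.inr (by linarith))
  have hg₁ := Lp.aestronglyMeasurable (F u₁)
  have hg₂ := Lp.aestronglyMeasurable (F u₂)
  have hag : AEStronglyMeasurable (fun ξ => (a ξ : ℂ) * (F u₁) ξ) volume :=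
    hconta.aestronglyMeasurable.mul hg₁
  have hig : AEStronglyMeasurable (fun ξ => Complex.I * (F u₂) ξ) volume :=
    aestronglyMeasurable_const.mul hg₂
  have hm₁ : AEStronglyMeasurable h₁ volume := hag.sub hig
  have hm₂ : AEStronglyMeasurable h₂ volume := hag.add hig
  -- finiteness of the main quantities
  have hPeq : ∀ ξ : EuclideanSpace ℝ (Fin d),
      ENNReal.ofReal ((‖ξ‖ ^ 2 + 1) ^ (s / 2)) * (‖(F u₁) ξ‖₊ : ℝ≥0∞) ^ 2
        = (‖((a ξ : ℂ) * (F u₁) ξ)‖₊ : ℝ≥0∞) ^ 2 := fun ξ => by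
    rw [hsq ξ, ofReal_sq_mul_nnnorm _ (ha0 ξ)]
  have hP : (∫⁻ ξ, (‖((a ξ : ℂ) * (F u₁) ξ)‖₊ : ℝ≥0∞) ^ 2) < ⊤ := by
    calc ∫⁻ ξ, (‖((a ξ : ℂ) * (F u₁) ξ)‖₊ : ℝ≥0∞) ^ 2
        = ∫⁻ ξ, ENNReal.ofReal ((‖ξ‖ ^ 2 + 1) ^ (s / 2)) * (‖(F u₁) ξ‖₊ : ℝ≥0∞) ^ 2 :=
          (lintegral_congr hPeq).symm
      _ ≤ ∫⁻ ξ, ENNReal.ofReal ((‖ξ‖ ^ 2 + 1) ^ s) * (‖(F u₁) ξ‖₊ : ℝ≥0∞) ^ 2 :=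
          lintegral_mono fun ξ => mul_le_mul_left
            (ENNReal.ofReal_le_ofReal
              (Real.rpow_le_rpow_of_exponent_le (hx1 ξ) (by linarith))) _
      _ < ⊤ := hu₁
  have hQ' : (∫⁻ ξ, (‖(F u₂) ξ‖₊ : ℝ≥0∞) ^ 2) < ⊤ := by
    rw [lintegral_nnnorm_sq_eq]
    exact ENNReal.pow_lt_top (Lp.eLpNorm_lt_top (F u₂))
  have hIg : ∀ ξ : EuclideanSpace ℝ (Fin d),
      (‖Complex.I * (F u₂) ξ‖₊ : ℝ≥0) = ‖(F u₂) ξ‖₊ := fun ξ => nnnorm_I_mul _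
  have hW₁fin : (∫⁻ ξ, (‖h₁ ξ‖₊ : ℝ≥0∞) ^ 2) < ⊤ := by
    calc (∫⁻ ξ, (‖h₁ ξ‖₊ : ℝ≥0∞) ^ 2)
        ≤ ∫⁻ ξ, (2 * (‖((a ξ : ℂ) * (F u₁) ξ)‖₊ : ℝ≥0∞) ^ 2
            + 2 * (‖(F u₂) ξ‖₊ : ℝ≥0∞) ^ 2) := by
          refine lintegral_mono fun ξ => ?_
          have h := nnnorm_sub_sq_le_two ((a ξ : ℂ) * (F u₁) ξ) (Complex.I * (F u₂) ξ)
          rwa [hIg ξ] at h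
      _ = 2 * (∫⁻ ξ, (‖((a ξ : ℂ) * (F u₁) ξ)‖₊ : ℝ≥0∞) ^ 2)
            + 2 * ∫⁻ ξ, (‖(F u₂) ξ‖₊ : ℝ≥0∞) ^ 2 :=
          lintegral_cmul_add_cmul 2 2 (by norm_num) (by norm_num) _ _
            (hag.aemeasurable.enorm.pow_const 2)
      _ < ⊤ := by
          exact ENNReal.add_lt_top.mpr ⟨ENNReal.mul_lt_top (by norm_num) hP,
            ENNReal.mul_lt_top (by norm_num) hQ'⟩
  have hW₂fin : (∫⁻ ξ, (‖h₂ ξ‖₊ : ℝ≥0∞) ^ 2) < ⊤ := by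
    calc (∫⁻ ξ, (‖h₂ ξ‖₊ : ℝ≥0∞) ^ 2)
        ≤ ∫⁻ ξ, (2 * (‖((a ξ : ℂ) * (F u₁) ξ)‖₊ : ℝ≥0∞) ^ 2
            + 2 * (‖(F u₂) ξ‖₊ : ℝ≥0∞) ^ 2) := by
          refine lintegral_mono fun ξ => ?_
          have h := nnnorm_add_sq_le_two ((a ξ : ℂ) * (F u₁) ξ) (Complex.I * (F u₂) ξ)
          rwa [hIg ξ] at h
      _ = 2 * (∫⁻ ξ, (‖((a ξ : ℂ) * (F u₁) ξ)‖₊ : ℝ≥0∞) ^ 2)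
            + 2 * ∫⁻ ξ, (‖(F u₂) ξ‖₊ : ℝ≥0∞) ^ 2 :=
          lintegral_cmul_add_cmul 2 2 (by norm_num) (by norm_num) _ _
            (hag.aemeasurable.enorm.pow_const 2)
      _ < ⊤ := by
          exact ENNReal.add_lt_top.mpr ⟨ENNReal.mul_lt_top (by norm_num) hP,
            ENNReal.mul_lt_top (by norm_num) hQ'⟩
  -- Lp representatives
  have hmem₁ : MemLp h₁ 2 volume := memLp_of_sq h₁ hm₁ hW₁fin
  have hmem₂ : MemLp h₂ 2 volume := memLp_of_sq h₂ hm₂ hW₂fin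
  set H₁ : Lp ℂ 2 (volume : Measure (EuclideanSpace ℝ (Fin d))) := hmem₁.toLp h₁ with hH₁_def
  set H₂ : Lp ℂ 2 (volume : Measure (EuclideanSpace ℝ (Fin d))) := hmem₂.toLp h₂ with hH₂_def
  set f₁ := F.symm H₁ with hf₁_def
  set f₂ := F.symm H₂ with hf₂_def
  have hFf₁ : F f₁ = H₁ := F.apply_symm_apply H₁
  have hPlan₁ : (∫⁻ x, (‖f₁ x‖₊ : ℝ≥0∞) ^ 2) = ∫⁻ ξ, (‖h₁ ξ‖₊ : ℝ≥0∞) ^ 2 := by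
    refine (lintegral_sq_eq_of_norm_eq (F.symm.norm_map H₁)).trans ?_
    refine lintegral_congr_ae ?_
    filter_upwards [hmem₁.coeFn_toLp] with ξ hξ
    rw [hξ]
  have hPlan₂ : (∫⁻ x, (‖f₂ x‖₊ : ℝ≥0∞) ^ 2) = ∫⁻ ξ, (‖h₂ ξ‖₊ : ℝ≥0∞) ^ 2 := by
    refine (lintegral_sq_eq_of_norm_eq (F.symm.norm_map H₂)).trans ?_
    refine lintegral_congr_ae ?_
    filter_upwards [hmem₂.coeFn_toLp] with ξ hξ
    rw [hξ]
  have hPlanu₂ : (∫⁻ x, (‖u₂ x‖₊ : ℝ≥0∞) ^ 2) = ∫⁻ ξ, (‖(F u₂) ξ‖₊ : ℝ≥0∞) ^ 2 :=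
    lintegral_sq_eq_of_norm_eq (F.norm_map u₂).symm
  -- the relation `f₂ = f₁ + 2i u₂`
  have hH : H₂ = H₁ + (2 * Complex.I) • (F u₂) := by
    refine Lp.ext ?_
    have e3 := Lp.coeFn_add H₁ ((2 * Complex.I) • (F u₂))
    have e4 := Lp.coeFn_smul (2 * Complex.I) (F u₂)
    filter_upwards [hmem₂.coeFn_toLp, hmem₁.coeFn_toLp, e3, e4] with ξ p2 p1 p3 p4
    rw [p2, p3, Pi.add_apply, p1, p4, Pi.smul_apply, smul_eq_mul]
    simp only [hh₁_def, hh₂_def]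
    ring
  have hf21 : f₂ = f₁ + (2 * Complex.I) • u₂ := by
    rw [hf₂_def, hH, map_add]
    rw [LinearIsometryEquiv.map_smul, LinearIsometryEquiv.symm_apply_apply, ← hf₁_def]
  have hae : ⇑f₂ =ᵐ[(volume : Measure (EuclideanSpace ℝ (Fin d)))]
      fun x => f₁ x + (2 * Complex.I) * u₂ x := by
    rw [hf21]
    filter_upwards [Lp.coeFn_add f₁ ((2 * Complex.I) • u₂), Lp.coeFn_smul (2 * Complex.I) u₂]
      with x p3 p4
    rw [p3, Pi.add_apply, p4, Pi.smul_apply, smul_eq_mul]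
  have hptΩ : ∀ᵐ x ∂(volume : Measure (EuclideanSpace ℝ (Fin d))),
      (‖f₁ x‖₊ : ℝ≥0∞) ^ 2 ≤ 2 * (‖f₂ x‖₊ : ℝ≥0∞) ^ 2 + 8 * (‖u₂ x‖₊ : ℝ≥0∞) ^ 2 := by
    filter_upwards [hae] with x hx
    have hx' : f₁ x = f₂ x - (2 * Complex.I) * u₂ x := by rw [hx]; ring
    have h8 : (‖(2 * Complex.I) * u₂ x‖₊ : ℝ≥0∞) ^ 2 = 4 * (‖u₂ x‖₊ : ℝ≥0∞) ^ 2 := by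
      have h2I : ‖(2 * Complex.I : ℂ)‖₊ = 2 := by
        rw [nnnorm_mul]; simp
      rw [nnnorm_mul, h2I]
      push_cast
      ring
    calc (‖f₁ x‖₊ : ℝ≥0∞) ^ 2 = (‖f₂ x - (2 * Complex.I) * u₂ x‖₊ : ℝ≥0∞) ^ 2 := by rw [hx']
      _ ≤ 2 * (‖f₂ x‖₊ : ℝ≥0∞) ^ 2 + 2 * (‖(2 * Complex.I) * u₂ x‖₊ : ℝ≥0∞) ^ 2 :=
          nnnorm_sub_sq_le_two _ _
      _ = 2 * (‖f₂ x‖₊ : ℝ≥0∞) ^ 2 + 8 * (‖u₂ x‖₊ : ℝ≥0∞) ^ 2 := by rw [h8]; ring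
  have hΩle : (∫⁻ x in Ω, (‖f₁ x‖₊ : ℝ≥0∞) ^ 2)
      ≤ 2 * (∫⁻ ξ, (‖h₂ ξ‖₊ : ℝ≥0∞) ^ 2) + 8 * ∫⁻ x in Ω, (‖u₂ x‖₊ : ℝ≥0∞) ^ 2 := by
    calc (∫⁻ x in Ω, (‖f₁ x‖₊ : ℝ≥0∞) ^ 2)
        ≤ ∫⁻ x in Ω, (2 * (‖f₂ x‖₊ : ℝ≥0∞) ^ 2 + 8 * (‖u₂ x‖₊ : ℝ≥0∞) ^ 2) :=
          lintegral_mono_ae (ae_restrict_of_ae hptΩ)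
      _ = 2 * (∫⁻ x in Ω, (‖f₂ x‖₊ : ℝ≥0∞) ^ 2) + 8 * ∫⁻ x in Ω, (‖u₂ x‖₊ : ℝ≥0∞) ^ 2 :=
          lintegral_cmul_add_cmul 2 8 (by norm_num) (by norm_num) _ _
            ((Lp.aestronglyMeasurable f₂).aemeasurable.enorm.pow_const 2).restrict
      _ ≤ 2 * (∫⁻ x, (‖f₂ x‖₊ : ℝ≥0∞) ^ 2) + 8 * ∫⁻ x in Ω, (‖u₂ x‖₊ : ℝ≥0∞) ^ 2 := by
          gcongr
          exact Measure.restrict_le_self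
      _ = 2 * (∫⁻ ξ, (‖h₂ ξ‖₊ : ℝ≥0∞) ^ 2) + 8 * ∫⁻ x in Ω, (‖u₂ x‖₊ : ℝ≥0∞) ^ 2 := by
          rw [hPlan₂]
  -- apply the scalar resolvent estimate to f₁
  have hres₁ := hres f₁ lam hlam
  rw [hFf₁, hPlan₁] at hres₁
  have hMid : (∫⁻ ξ, (‖((((‖ξ‖ ^ 2 + 1) ^ (s / 4) - lam : ℝ) : ℂ) * H₁ ξ)‖₊ : ℝ≥0∞) ^ 2)
      = ∫⁻ ξ, (‖((((‖ξ‖ ^ 2 + 1) ^ (s / 4) - lam : ℝ) : ℂ) * h₁ ξ)‖₊ : ℝ≥0∞) ^ 2 := by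
    refine lintegral_congr_ae ?_
    filter_upwards [hmem₁.coeFn_toLp] with ξ hξ
    rw [hξ]
  rw [hMid] at hres₁
  -- names for the integrals on the right-hand side
  set T₁ := ∫⁻ ξ, ENNReal.ofReal ((‖ξ‖ ^ 2 + 1) ^ (s / 2)) *
      (‖(F u₂) ξ - (Complex.I * lam) * (F u₁) ξ‖₊ : ℝ≥0∞) ^ 2 with hT₁_def
  set T₂ := ∫⁻ ξ, (‖((((‖ξ‖ ^ 2 + 1) ^ (s / 2) : ℝ) : ℂ) * (F u₁) ξ +
      (Complex.I * lam) * (F u₂) ξ)‖₊ : ℝ≥0∞) ^ 2 with hT₂_def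
  set T₃ := ∫⁻ x in Ω, (‖u₂ x‖₊ : ℝ≥0∞) ^ 2 with hT₃_def
  set T₁' := ∫⁻ ξ, (‖((a ξ : ℂ) * ((F u₂) ξ - (Complex.I * lam) * (F u₁) ξ))‖₊ : ℝ≥0∞) ^ 2
    with hT₁'_def
  have hT₁eq : T₁ = T₁' := by
    rw [hT₁_def, hT₁'_def]
    exact lintegral_congr fun ξ => by rw [hsq ξ, ofReal_sq_mul_nnnorm _ (ha0 ξ)]
  have hBmeas : AEMeasurable
      (fun ξ => (‖((a ξ : ℂ) * ((F u₂) ξ - (Complex.I * lam) * (F u₁) ξ))‖₊ : ℝ≥0∞) ^ 2)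
      (volume : Measure (EuclideanSpace ℝ (Fin d))) :=
    ((hconta.aestronglyMeasurable.mul
      (hg₂.sub (aestronglyMeasurable_const.mul hg₁))).aemeasurable.enorm.pow_const 2)
  -- bound the middle term via the diagonalization identity
  have hMle : (∫⁻ ξ, (‖((((‖ξ‖ ^ 2 + 1) ^ (s / 4) - lam : ℝ) : ℂ) * h₁ ξ)‖₊ : ℝ≥0∞) ^ 2)
      ≤ 2 * T₁' + 2 * T₂ := by
    calc (∫⁻ ξ, (‖((((‖ξ‖ ^ 2 + 1) ^ (s / 4) - lam : ℝ) : ℂ) * h₁ ξ)‖₊ : ℝ≥0∞) ^ 2)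
        ≤ ∫⁻ ξ, (2 * (‖((a ξ : ℂ) * ((F u₂) ξ - (Complex.I * lam) * (F u₁) ξ))‖₊ : ℝ≥0∞) ^ 2
            + 2 * (‖((((‖ξ‖ ^ 2 + 1) ^ (s / 2) : ℝ) : ℂ) * (F u₁) ξ +
              (Complex.I * lam) * (F u₂) ξ)‖₊ : ℝ≥0∞) ^ 2) := by
          refine lintegral_mono fun ξ => ?_
          simp only [hh₁_def]
          exact normA ((‖ξ‖ ^ 2 + 1) ^ (s / 4)) lam ((F u₁) ξ) ((F u₂) ξ) _ (hsq ξ)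
      _ = 2 * T₁' + 2 * T₂ := by
          rw [hT₁'_def, hT₂_def]
          exact lintegral_cmul_add_cmul 2 2 (by norm_num) (by norm_num) _ _ hBmeas
  -- lower bound for the second diagonal component
  have hW₂le : (∫⁻ ξ, (‖h₂ ξ‖₊ : ℝ≥0∞) ^ 2) ≤ 2 * T₁' + 2 * T₂ := by
    calc (∫⁻ ξ, (‖h₂ ξ‖₊ : ℝ≥0∞) ^ 2)
        ≤ ∫⁻ ξ, (2 * (‖((a ξ : ℂ) * ((F u₂) ξ - (Complex.I * lam) * (F u₁) ξ))‖₊ : ℝ≥0∞) ^ 2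
            + 2 * (‖((((‖ξ‖ ^ 2 + 1) ^ (s / 2) : ℝ) : ℂ) * (F u₁) ξ +
              (Complex.I * lam) * (F u₂) ξ)‖₊ : ℝ≥0∞) ^ 2) := by
          refine lintegral_mono fun ξ => ?_
          simp only [hh₂_def]
          exact normB ((‖ξ‖ ^ 2 + 1) ^ (s / 4)) lam (ha1 ξ) hlam ((F u₁) ξ) ((F u₂) ξ) _ (hsq ξ)
      _ = 2 * T₁' + 2 * T₂ := by
          rw [hT₁'_def, hT₂_def]
          exact lintegral_cmul_add_cmul 2 2 (by norm_num) (by norm_num) _ _ hBmeas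
  -- parallelogram identity
  have hpar : (∫⁻ ξ, (‖h₁ ξ‖₊ : ℝ≥0∞) ^ 2) + (∫⁻ ξ, (‖h₂ ξ‖₊ : ℝ≥0∞) ^ 2)
      = 2 * (∫⁻ ξ, (‖((a ξ : ℂ) * (F u₁) ξ)‖₊ : ℝ≥0∞) ^ 2)
        + 2 * ∫⁻ ξ, (‖(F u₂) ξ‖₊ : ℝ≥0∞) ^ 2 := by
    rw [← lintegral_add_left' (hm₁.aemeasurable.nnnorm.coe_nnreal_ennreal.pow_const 2)]
    calc ∫⁻ ξ, ((‖h₁ ξ‖₊ : ℝ≥0∞) ^ 2 + (‖h₂ ξ‖₊ : ℝ≥0∞) ^ 2)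
        = ∫⁻ ξ, (2 * (‖((a ξ : ℂ) * (F u₁) ξ)‖₊ : ℝ≥0∞) ^ 2
            + 2 * (‖(F u₂) ξ‖₊ : ℝ≥0∞) ^ 2) := by
          refine lintegral_congr fun ξ => ?_
          simp only [hh₁_def, hh₂_def]
          have hp := nnnorm_parallelogram ((a ξ : ℂ) * (F u₁) ξ) (Complex.I * (F u₂) ξ)
          rw [hIg ξ] at hp
          exact hp
      _ = _ := lintegral_cmul_add_cmul 2 2 (by norm_num) (by norm_num) _ _
          (hag.aemeasurable.enorm.pow_const 2)
  -- the full resolvent bound for the first diagonal component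
  have hc4 : (0 : ℝ) < c + 4 := by linarith
  have hKW₁ : ENNReal.ofReal (c * Real.exp (-C * lam)) * (∫⁻ ξ, (‖h₁ ξ‖₊ : ℝ≥0∞) ^ 2)
      ≤ 8 * (T₁' + T₂ + T₃) := by
    refine le_trans hres₁ ?_
    refine le_trans (add_le_add hMle
      (hΩle.trans (add_le_add (mul_le_mul_right hW₂le 2) le_rfl))) ?_
    calc (2 * T₁' + 2 * T₂) + (2 * (2 * T₁' + 2 * T₂) + 8 * T₃)
        = 6 * T₁' + 6 * T₂ + 8 * T₃ := by ring
      _ ≤ 8 * T₁' + 8 * T₂ + 8 * T₃ := by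
          refine add_le_add (add_le_add (mul_le_mul_left (by norm_num) _)
            (mul_le_mul_left (by norm_num) _)) le_rfl
      _ = 8 * (T₁' + T₂ + T₃) := by ring
  -- conclusion
  rw [hT₁eq, show (∫⁻ ξ, ENNReal.ofReal ((‖ξ‖ ^ 2 + 1) ^ (s / 2)) * (‖(F u₁) ξ‖₊ : ℝ≥0∞) ^ 2)
    = ∫⁻ ξ, (‖((a ξ : ℂ) * (F u₁) ξ)‖₊ : ℝ≥0∞) ^ 2 from lintegral_congr hPeq, hPlanu₂]
  refine (ENNReal.mul_le_mul_iff_right (a := 2) (by norm_num) (by norm_num)).mp ?_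
  have h1c : (0 : ℝ) ≤ 1 / (c + 4) := le_of_lt (div_pos one_pos hc4)
  have hcc : (0 : ℝ) ≤ c / (c + 4) := le_of_lt (div_pos hc hc4)
  calc 2 * (ENNReal.ofReal (c / (c + 4) * Real.exp (-C * lam)) *
        ((∫⁻ ξ, (‖((a ξ : ℂ) * (F u₁) ξ)‖₊ : ℝ≥0∞) ^ 2) + ∫⁻ ξ, (‖(F u₂) ξ‖₊ : ℝ≥0∞) ^ 2))
      = ENNReal.ofReal (c / (c + 4) * Real.exp (-C * lam)) *
          (2 * (∫⁻ ξ, (‖((a ξ : ℂ) * (F u₁) ξ)‖₊ : ℝ≥0∞) ^ 2)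
            + 2 * ∫⁻ ξ, (‖(F u₂) ξ‖₊ : ℝ≥0∞) ^ 2) := by ring
    _ = ENNReal.ofReal (c / (c + 4) * Real.exp (-C * lam)) *
          ((∫⁻ ξ, (‖h₁ ξ‖₊ : ℝ≥0∞) ^ 2) + ∫⁻ ξ, (‖h₂ ξ‖₊ : ℝ≥0∞) ^ 2) := by rw [hpar]
    _ = ENNReal.ofReal (c / (c + 4) * Real.exp (-C * lam)) * (∫⁻ ξ, (‖h₁ ξ‖₊ : ℝ≥0∞) ^ 2)
        + ENNReal.ofReal (c / (c + 4) * Real.exp (-C * lam)) * ∫⁻ ξ, (‖h₂ ξ‖₊ : ℝ≥0∞) ^ 2 :=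
        mul_add _ _ _
    _ ≤ ENNReal.ofReal (1 / (c + 4)) *
          (ENNReal.ofReal (c * Real.exp (-C * lam)) * ∫⁻ ξ, (‖h₁ ξ‖₊ : ℝ≥0∞) ^ 2)
        + ENNReal.ofReal (c / (c + 4)) * ∫⁻ ξ, (‖h₂ ξ‖₊ : ℝ≥0∞) ^ 2 := by
        refine add_le_add (le_of_eq ?_) (mul_le_mul_left (ENNReal.ofReal_le_ofReal ?_) _)
        · rw [← mul_assoc, ← ENNReal.ofReal_mul h1c]
          congr 2
          field_simp
        · refine mul_le_of_le_one_right hcc (Real.exp_le_one_iff.mpr ?_)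
          nlinarith
    _ ≤ ENNReal.ofReal (1 / (c + 4)) * (8 * (T₁' + T₂ + T₃))
        + ENNReal.ofReal (c / (c + 4)) * (2 * (T₁' + T₂ + T₃)) := by
        refine add_le_add (mul_le_mul_right hKW₁ _) (mul_le_mul_right ?_ _)
        refine hW₂le.trans ?_
        calc 2 * T₁' + 2 * T₂ ≤ 2 * T₁' + 2 * T₂ + 2 * T₃ := le_self_add
          _ = 2 * (T₁' + T₂ + T₃) := by ring
    _ = (ENNReal.ofReal (1 / (c + 4)) * 8 + ENNReal.ofReal (c / (c + 4)) * 2) *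
          (T₁' + T₂ + T₃) := by ring
    _ = 2 * (T₁' + T₂ + T₃) := by
        congr 1
        have e1 : ENNReal.ofReal (1 / (c + 4)) * 8 = ENNReal.ofReal (1 / (c + 4) * 8) := by
          rw [ENNReal.ofReal_mul h1c, ENNReal.ofReal_ofNat]
        have e2 : ENNReal.ofReal (c / (c + 4)) * 2 = ENNReal.ofReal (c / (c + 4) * 2) := by
          rw [ENNReal.ofReal_mul hcc, ENNReal.ofReal_ofNat]
        rw [e1, e2, ← ENNReal.ofReal_add (by positivity) (by positivity),
          show 1 / (c + 4) * 8 + c / (c + 4) * 2 = 2 by field_simp; ring]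
        norm_num



/-- Resolvent estimate for the Klein–Gordon generator `𝒜₀(u₁,u₂) = (u₂, -(-Δ+1)^{s/2}u₁)` on
`ℋ = H^{s/2} × L²`: assuming the scalar resolvent estimate for `(-Δ+1)^{s/4}`, there are
`C', c' > 0` with `c' e^{-C'|λ|} ‖U‖²_{H^{s/2}×L²} ≤ ‖(𝒜₀ - iλ)U‖²_{H^{s/2}×L²} + ‖u₂‖²_{L²(Ω)}`
for all `U = (u₁,u₂) ∈ H^s × H^{s/2}` and `λ ∈ ℝ`.  All operators and Sobolev norms are realized
on the Fourier side via the Fourier–Plancherel unitary `F`, with symbol `(|ξ|²+1)`. -/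
theorem kg_resolvent_estimate (d : ℕ) (s : ℝ) (hs : 2 ≤ s)
    (Ω : Set (EuclideanSpace ℝ (Fin d))) (hΩm : MeasurableSet Ω) (hΩ : Thick Ω)
    (F : Lp ℂ 2 (volume : Measure (EuclideanSpace ℝ (Fin d))) ≃ₗᵢ[ℂ]
      Lp ℂ 2 (volume : Measure (EuclideanSpace ℝ (Fin d))))
    (hF : ∀ f : Lp ℂ 2 (volume : Measure (EuclideanSpace ℝ (Fin d))),
      Integrable (⇑f) volume → (⇑(F f)) =ᵐ[volume] 𝓕 ⇑f)
    (C c : ℝ) (hC : 0 < C) (hc : 0 < c)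
    (hres : ∀ f : Lp ℂ 2 (volume : Measure (EuclideanSpace ℝ (Fin d))), ∀ mu : ℝ, 0 ≤ mu →
      ENNReal.ofReal (c * Real.exp (-C * mu)) * ∫⁻ x, (‖f x‖₊ : ℝ≥0∞) ^ 2 ≤
        (∫⁻ ξ, (‖((((‖ξ‖ ^ 2 + 1) ^ (s / 4) - mu : ℝ) : ℂ) * (F f) ξ)‖₊ : ℝ≥0∞) ^ 2) +
        ∫⁻ x in Ω, (‖f x‖₊ : ℝ≥0∞) ^ 2) :
    ∃ C' > (0 : ℝ), ∃ c' > (0 : ℝ), ∀ lam : ℝ,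
      ∀ u₁ u₂ : Lp ℂ 2 (volume : Measure (EuclideanSpace ℝ (Fin d))),
        -- `u₁ ∈ H^s`
        (∫⁻ ξ, ENNReal.ofReal ((‖ξ‖ ^ 2 + 1) ^ s) * (‖(F u₁) ξ‖₊ : ℝ≥0∞) ^ 2) < ⊤ →
        -- `u₂ ∈ H^{s/2}`
        (∫⁻ ξ, ENNReal.ofReal ((‖ξ‖ ^ 2 + 1) ^ (s / 2)) * (‖(F u₂) ξ‖₊ : ℝ≥0∞) ^ 2) < ⊤ →
        ENNReal.ofReal (c' * Real.exp (-C' * |lam|)) *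
            ((∫⁻ ξ, ENNReal.ofReal ((‖ξ‖ ^ 2 + 1) ^ (s / 2)) * (‖(F u₁) ξ‖₊ : ℝ≥0∞) ^ 2) +
              ∫⁻ x, (‖u₂ x‖₊ : ℝ≥0∞) ^ 2) ≤
          (∫⁻ ξ, ENNReal.ofReal ((‖ξ‖ ^ 2 + 1) ^ (s / 2)) *
              (‖(F u₂) ξ - (Complex.I * lam) * (F u₁) ξ‖₊ : ℝ≥0∞) ^ 2) +
          (∫⁻ ξ, (‖((((‖ξ‖ ^ 2 + 1) ^ (s / 2) : ℝ) : ℂ) * (F u₁) ξ +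
              (Complex.I * lam) * (F u₂) ξ)‖₊ : ℝ≥0∞) ^ 2) +
          ∫⁻ x in Ω, (‖u₂ x‖₊ : ℝ≥0∞) ^ 2 := by
  refine ⟨C, hC, c / (c + 4), div_pos hc (by linarith), ?_⟩
  intro lam u₁ u₂ h1 _h2
  rcases le_or_gt 0 lam with hl | hl
  · rw [_root_.abs_of_nonneg hl]
    exact kg_key d s hs Ω F C c hC hc hres lam hl u₁ u₂ h1
  · rw [_root_.abs_of_neg hl]
    have key := kg_key d s hs Ω F C c hC hc hres (-lam) (by linarith) u₁ (-u₂) h1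
    have hFn : F (-u₂) = -(F u₂) := by simp
    rw [hFn] at key
    have eQ : (∫⁻ x, (‖(-u₂ : Lp ℂ 2 (volume : Measure (EuclideanSpace ℝ (Fin d)))) x‖₊ :
        ℝ≥0∞) ^ 2) = ∫⁻ x, (‖u₂ x‖₊ : ℝ≥0∞) ^ 2 := by
      refine lintegral_congr_ae ?_
      filter_upwards [Lp.coeFn_neg u₂] with x hx
      rw [hx, Pi.neg_apply, nnnorm_neg]
    have eΩ : (∫⁻ x in Ω, (‖(-u₂ : Lp ℂ 2 (volume : Measure (EuclideanSpace ℝ (Fin d)))) x‖₊ :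
        ℝ≥0∞) ^ 2) = ∫⁻ x in Ω, (‖u₂ x‖₊ : ℝ≥0∞) ^ 2 := by
      refine lintegral_congr_ae (ae_restrict_of_ae ?_)
      filter_upwards [Lp.coeFn_neg u₂] with x hx
      rw [hx, Pi.neg_apply, nnnorm_neg]
    have eT₁ : (∫⁻ ξ, ENNReal.ofReal ((‖ξ‖ ^ 2 + 1) ^ (s / 2)) *
        (‖(-(F u₂) : Lp ℂ 2 (volume : Measure (EuclideanSpace ℝ (Fin d)))) ξ -
          (Complex.I * ((-lam : ℝ) : ℂ)) * (F u₁) ξ‖₊ : ℝ≥0∞) ^ 2)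
        = ∫⁻ ξ, ENNReal.ofReal ((‖ξ‖ ^ 2 + 1) ^ (s / 2)) *
        (‖(F u₂) ξ - (Complex.I * (lam : ℝ)) * (F u₁) ξ‖₊ : ℝ≥0∞) ^ 2 := by
      refine lintegral_congr_ae ?_
      filter_upwards [Lp.coeFn_neg (F u₂)] with ξ hξ
      rw [hξ, Pi.neg_apply,
        show -((F u₂) ξ) - (Complex.I * ((-lam : ℝ) : ℂ)) * (F u₁) ξ
          = -((F u₂) ξ - (Complex.I * (lam : ℝ)) * (F u₁) ξ) by push_cast; ring,
        nnnorm_neg]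
    have eT₂ : (∫⁻ ξ, (‖((((‖ξ‖ ^ 2 + 1) ^ (s / 2) : ℝ) : ℂ) * (F u₁) ξ +
        (Complex.I * ((-lam : ℝ) : ℂ)) *
          (-(F u₂) : Lp ℂ 2 (volume : Measure (EuclideanSpace ℝ (Fin d)))) ξ)‖₊ : ℝ≥0∞) ^ 2)
        = ∫⁻ ξ, (‖((((‖ξ‖ ^ 2 + 1) ^ (s / 2) : ℝ) : ℂ) * (F u₁) ξ +
        (Complex.I * (lam : ℝ)) * (F u₂) ξ)‖₊ : ℝ≥0∞) ^ 2 := by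
      refine lintegral_congr_ae ?_
      filter_upwards [Lp.coeFn_neg (F u₂)] with ξ hξ
      rw [hξ, Pi.neg_apply,
        show ((((‖ξ‖ ^ 2 + 1) ^ (s / 2) : ℝ) : ℂ) * (F u₁) ξ +
            (Complex.I * ((-lam : ℝ) : ℂ)) * (-((F u₂) ξ)))
          = ((((‖ξ‖ ^ 2 + 1) ^ (s / 2) : ℝ) : ℂ) * (F u₁) ξ +
            (Complex.I * (lam : ℝ)) * (F u₂) ξ) by push_cast; ring]
    rw [eQ, eΩ, eT₁, eT₂] at key
    exact key
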